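/- Let (X, X') be an exchangeable pair of random variables taking values in a separable metric space 𝒳, let F : 𝒳 × 𝒳 → ℝ be square-integrable and antisymmetric, and let f : 𝒳 → ℝ be square-integrable with E(F(X,X') | X) = f(X) a.s. Define Δ(X) := (1/2) E(|(f(X) - f(X')) F(X,X')| | X). Then for every positive integer k, E(f(X)^{2k}) ≤ (2k-1)^k E(Δ(X)^k). -/

import Mathlib

open MeasureTheory ENNReal

section aux

open Finset in
lemma geom_sum_aux {x y : ℝ} (hx : 0 ≤ x) (hy : 0 ≤ y) (n : ℕ) :
    2 * ∑ i ∈ range (n+1), x ^ i * y ^ (n - i) ≤ (n+1) * (x ^ n + y ^ n) := by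
  have h := Finset.sum_range_reflect (fun i => x ^ i * y ^ (n - i)) (n+1)
  have key : ∀ i ∈ range (n+1),
      x ^ i * y ^ (n - i) + x ^ (n - i) * y ^ i ≤ x ^ n + y ^ n := by
    intro i hi
    have hi' : i ≤ n := by simpa using Nat.lt_succ_iff.mp (mem_range.mp hi)
    have h1 : (x ^ i - y ^ i) * (x ^ (n-i) - y ^ (n-i)) ≥ 0 := by
      rcases le_total x y with hxy | hxy
      · have := pow_le_pow_left₀ hx hxy i
        have := pow_le_pow_left₀ hx hxy (n-i)
        nlinarith
      · have := pow_le_pow_left₀ hy hxy i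
        have := pow_le_pow_left₀ hy hxy (n-i)
        nlinarith
    have hxn : x ^ i * x ^ (n-i) = x ^ n := by
      rw [← pow_add]; congr 1; omega
    have hyn : y ^ i * y ^ (n-i) = y ^ n := by
      rw [← pow_add]; congr 1; omega
    nlinarith
  calc 2 * ∑ i ∈ range (n+1), x ^ i * y ^ (n - i)
      = ∑ i ∈ range (n+1), (x ^ i * y ^ (n - i) + x ^ (n-i) * y ^ i) := by
        rw [Finset.sum_add_distrib, two_mul]
        congr 1
        rw [← h]
        refine Finset.sum_congr rfl fun i hi => ?_
        have hi' : i ≤ n := Nat.lt_succ_iff.mp (mem_range.mp hi)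
        congr 2 <;> omega
    _ ≤ ∑ _i ∈ range (n+1), (x ^ n + y ^ n) := Finset.sum_le_sum key
    _ = (n+1) * (x ^ n + y ^ n) := by simp; ring

lemma odd_pow_sub_le (a b : ℝ) (k : ℕ) (hk : 0 < k) :
    2 * |a ^ (2*k-1) - b ^ (2*k-1)| ≤
      (2*k-1 : ℕ) * (a ^ (2*k-2) + b ^ (2*k-2)) * |a - b| := by
  have hm : 2*k-1 = (2*k-2) + 1 := by omega
  have hgs := geom_sum₂_mul a b (2*k-1)
  have h1 : |a ^ (2*k-1) - b ^ (2*k-1)|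
      ≤ (∑ i ∈ Finset.range ((2*k-2)+1), |a| ^ i * |b| ^ ((2*k-2) - i)) * |a - b| := by
    rw [← hgs, abs_mul, hm]
    gcongr
    refine (Finset.abs_sum_le_sum_abs _ _).trans ?_
    refine Finset.sum_le_sum fun i hi => ?_
    rw [abs_mul, abs_pow, abs_pow]
    have : (2*k-2)+1-1-i = (2*k-2)-i := by omega
    rw [this]
  have h2 := geom_sum_aux (abs_nonneg a) (abs_nonneg b) (2*k-2)
  have heven : Even (2*k-2) := by refine ⟨k-1, by omega⟩
  rw [heven.pow_abs, heven.pow_abs] at h2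
  have hcast : ((2*k-2 : ℕ) : ℝ) + 1 = ((2*k-1 : ℕ) : ℝ) := by norm_cast; omega
  calc 2 * |a ^ (2*k-1) - b ^ (2*k-1)|
      ≤ 2 * ((∑ i ∈ Finset.range ((2*k-2)+1), |a| ^ i * |b| ^ ((2*k-2) - i)) * |a - b|) := by
        linarith [abs_nonneg (a ^ (2*k-1) - b ^ (2*k-1))]
    _ = (2 * ∑ i ∈ Finset.range ((2*k-2)+1), |a| ^ i * |b| ^ ((2*k-2) - i)) * |a - b| := by ring
    _ ≤ (((2*k-2 : ℕ) : ℝ) + 1) * (a ^ (2*k-2) + b ^ (2*k-2)) * |a - b| := by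
        exact mul_le_mul_of_nonneg_right h2 (abs_nonneg _)
    _ = (2*k-1 : ℕ) * (a ^ (2*k-2) + b ^ (2*k-2)) * |a - b| := by rw [hcast]


noncomputable def trunc (n : ℕ) (t : ℝ) : ℝ := max (min t n) (-(n:ℝ))

lemma trunc_abs_le_n (n : ℕ) (t : ℝ) : |trunc n t| ≤ n := by
  rw [abs_le, trunc]
  constructor
  · exact le_max_right _ _
  · exact max_le (min_le_right _ _) (by simp)

lemma trunc_abs (n : ℕ) (t : ℝ) : |trunc n t| = min |t| n := by
  have hn : (0:ℝ) ≤ n := by positivity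
  rcases le_total t 0 with ht | ht
  · have h1 : min t (n:ℝ) = t := min_eq_left (ht.trans hn)
    have h2 : max t (-(n:ℝ)) ≤ 0 := max_le ht (by linarith)
    rw [trunc, h1, abs_of_nonpos h2, abs_of_nonpos ht, ← min_neg_neg, neg_neg]
  · have h0 : (0:ℝ) ≤ min t n := le_min ht hn
    have : trunc n t = min t n := max_eq_left (by linarith)
    rw [this, abs_of_nonneg h0, abs_of_nonneg ht]

lemma trunc_lipschitz (n : ℕ) (t s : ℝ) : |trunc n t - trunc n s| ≤ |t - s| := by
  refine (abs_max_sub_max_le_abs _ _ _).trans ?_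
  refine (abs_min_sub_min_le_max t (n:ℝ) s (n:ℝ)).trans ?_
  simp

lemma trunc_self_mul (n : ℕ) (t : ℝ) (k : ℕ) (hk : 0 < k) :
    trunc n t ^ (2*k) ≤ trunc n t ^ (2*k-1) * t := by
  have key : 0 ≤ trunc n t ^ (2*k-1) * (t - trunc n t) := by
    have hn : (0:ℝ) ≤ n := by positivity
    rcases le_total 0 t with ht | ht
    · have h1 : 0 ≤ trunc n t := le_max_of_le_left (le_min ht hn)
      have h2 : trunc n t ≤ t := by
        rw [trunc]
        exact max_le (min_le_left _ _) (by linarith)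
      exact mul_nonneg (pow_nonneg h1 _) (by linarith)
    · have h1 : trunc n t ≤ 0 := by
        rw [trunc]
        exact max_le (le_trans (min_le_left _ _) ht) (by linarith)
      have h2 : t ≤ trunc n t := by
        rw [trunc, min_eq_left (by linarith)]
        exact le_max_left _ _
      have hodd : Odd (2*k-1) := ⟨k-1, by omega⟩
      nlinarith [hodd.pow_nonpos h1]
  have hpow : trunc n t ^ (2*k-1) * trunc n t = trunc n t ^ (2*k) := by
    rw [← pow_succ]; congr 1; omega
  nlinarith [key, hpow]

lemma trunc_continuous (n : ℕ) : Continuous (trunc n) :=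
  (continuous_id.min continuous_const).max continuous_const

lemma trunc_eq_self {n : ℕ} {t : ℝ} (h : |t| ≤ n) : trunc n t = t := by
  rw [abs_le] at h
  rw [trunc, min_eq_left h.2, max_eq_left h.1]


/-- Pull-out helper: for bounded `m`-measurable `g` and integrable `H`,
`∫ g·H = ∫ g·E[H|m]`. -/
lemma pull_out_condexp {Ω : Type*} {m : MeasurableSpace Ω} {mΩ : MeasurableSpace Ω}
    (hm : m ≤ mΩ) (μ : Measure Ω) [IsProbabilityMeasure μ]
    (g H : Ω → ℝ) (hg : StronglyMeasurable[m] g)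
    (C : ℝ) (hC : ∀ ω, |g ω| ≤ C) (hH : Integrable H μ) :
    ∫ ω, g ω * H ω ∂μ = ∫ ω, g ω * (μ[H | m]) ω ∂μ := by
  have hint : Integrable (g * H) μ :=
    hH.bdd_mul (hg.mono hm).aestronglyMeasurable
      (Filter.Eventually.of_forall fun ω => by simpa [Real.norm_eq_abs] using hC ω)
  calc ∫ ω, g ω * H ω ∂μ
      = ∫ ω, (μ[g * H | m]) ω ∂μ := (integral_condExp hm).symm
    _ = ∫ ω, g ω * (μ[H | m]) ω ∂μ := by
        refine integral_congr_ae ?_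
        filter_upwards [condExp_mul_of_stronglyMeasurable_left hg hint hH] with ω hω
        simpa using hω

/-- Exchangeability transfer. -/
lemma swap_integral_exch {Ω 𝒳 : Type*} [MeasurableSpace Ω] [MeasurableSpace 𝒳]
    (μ : Measure Ω) (X X' : Ω → 𝒳) (hX : Measurable X) (hX' : Measurable X')
    (hexch : Measure.map (fun ω => (X ω, X' ω)) μ = Measure.map (fun ω => (X' ω, X ω)) μ)
    (h : 𝒳 → 𝒳 → ℝ) (hh : Measurable (Function.uncurry h)) :
    ∫ ω, h (X ω) (X' ω) ∂μ = ∫ ω, h (X' ω) (X ω) ∂μ := by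
  have h1 : AEStronglyMeasurable (Function.uncurry h)
      (Measure.map (fun ω => (X ω, X' ω)) μ) := hh.aestronglyMeasurable
  have h2 : AEStronglyMeasurable (Function.uncurry h)
      (Measure.map (fun ω => (X' ω, X ω)) μ) := hh.aestronglyMeasurable
  have e1 := integral_map (φ := fun ω => (X ω, X' ω)) (f := Function.uncurry h)
    ((hX.prodMk hX').aemeasurable) h1
  have e2 := integral_map (φ := fun ω => (X' ω, X ω)) (f := Function.uncurry h)
    ((hX'.prodMk hX).aemeasurable) h2
  rw [hexch, e2] at e1
  exact e1.symm

lemma core_ineq {Ω 𝒳 : Type*} {m : MeasurableSpace Ω} {mΩ : MeasurableSpace Ω}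
    [MetricSpace 𝒳] [MeasurableSpace 𝒳] [BorelSpace 𝒳]
    (hm : m ≤ mΩ) (μ : Measure Ω) [IsProbabilityMeasure μ]
    (X X' : Ω → 𝒳) (hX : Measurable X) (hX' : Measurable X')
    (hXm : Measurable[m] X)
    (hexch : Measure.map (fun ω => (X ω, X' ω)) μ = Measure.map (fun ω => (X' ω, X ω)) μ)
    (F : 𝒳 → 𝒳 → ℝ) (hF : Measurable (Function.uncurry F))
    (hFL2 : MemLp (fun ω => F (X ω) (X' ω)) 2 μ)
    (hFanti : ∀ᵐ ω ∂μ, F (X ω) (X' ω) = - F (X' ω) (X ω))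
    (f : 𝒳 → ℝ) (hf : Measurable f)
    (hfL2 : MemLp (fun ω => f (X ω)) 2 μ)
    (hcond : μ[(fun ω => F (X ω) (X' ω)) | m] =ᵐ[μ] fun ω => f (X ω))
    (hprod : Integrable (fun ω => (f (X ω) - f (X' ω)) * F (X ω) (X' ω)) μ)
    (k : ℕ) (hk : 0 < k) (n : ℕ) :
    ∫ ω, (trunc n (f (X ω))) ^ (2*k) ∂μ
      ≤ (2*k-1 : ℕ) * ∫ ω, (trunc n (f (X ω))) ^ (2*k-2) *
          ((1/2) * (μ[(fun ω' => |(f (X ω') - f (X' ω')) * F (X ω') (X' ω')|) | m]) ω) ∂μ := by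
  have hfX1 : Integrable (fun ω => f (X ω)) μ := hfL2.integrable one_le_two
  have hFX1 : Integrable (fun ω => F (X ω) (X' ω)) μ := hFL2.integrable one_le_two
  have hGabs : Integrable (fun ω => |(f (X ω) - f (X' ω)) * F (X ω) (X' ω)|) μ := hprod.abs
  set D : Ω → ℝ := μ[(fun ω' => |(f (X ω') - f (X' ω')) * F (X ω') (X' ω')|) | m] with hD_def
  have hDint : Integrable D μ := integrable_condExp
  -- abbreviations
  set g1 : 𝒳 → ℝ := fun x => (trunc n (f x)) ^ (2*k-1) with hg1_def
  set g2 : 𝒳 → ℝ := fun x => (trunc n (f x)) ^ (2*k-2) with hg2_def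
  have htm : Measurable (fun x => trunc n (f x)) := (trunc_continuous n).measurable.comp hf
  have hg1m : Measurable g1 := htm.pow_const _
  have hg2m : Measurable g2 := htm.pow_const _
  have hg1b : ∀ x, |g1 x| ≤ (n:ℝ) ^ (2*k-1) := fun x => by
    rw [hg1_def, abs_pow]; exact pow_le_pow_left₀ (abs_nonneg _) (trunc_abs_le_n n (f x)) _
  have hg2b : ∀ x, |g2 x| ≤ (n:ℝ) ^ (2*k-2) := fun x => by
    rw [hg2_def, abs_pow]; exact pow_le_pow_left₀ (abs_nonneg _) (trunc_abs_le_n n (f x)) _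
  -- bounded measurable times integrable is integrable
  have hbm : ∀ (g₀ : 𝒳 → ℝ) (Y : Ω → 𝒳), Measurable g₀ → Measurable Y →
      ∀ C : ℝ, (∀ x, |g₀ x| ≤ C) → ∀ H : Ω → ℝ, Integrable H μ →
      Integrable (fun ω => g₀ (Y ω) * H ω) μ := by
    intro g₀ Y hg₀ hY C hC H hH
    exact hH.bdd_mul (hg₀.comp hY).aestronglyMeasurable
      (Filter.Eventually.of_forall fun ω => by simpa [Real.norm_eq_abs] using hC (Y ω))
  have I1 : Integrable (fun ω => (trunc n (f (X ω))) ^ (2*k)) μ := by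
    have : Integrable (fun ω => ((fun x => (trunc n (f x))^(2*k)) (X ω)) * 1) μ :=
      hbm _ X (htm.pow_const _) hX ((n:ℝ)^(2*k))
        (fun x => by rw [abs_pow]; exact pow_le_pow_left₀ (abs_nonneg _) (trunc_abs_le_n n (f x)) _)
        1 (integrable_const 1)
    simpa using this
  have I2 : Integrable (fun ω => g1 (X ω) * f (X ω)) μ := hbm g1 X hg1m hX _ hg1b _ hfX1
  have I3 : Integrable (fun ω => g1 (X ω) * F (X ω) (X' ω)) μ := hbm g1 X hg1m hX _ hg1b _ hFX1
  have I4 : Integrable (fun ω => g1 (X' ω) * F (X ω) (X' ω)) μ := hbm g1 X' hg1m hX' _ hg1b _ hFX1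
  have I5 : Integrable (fun ω => g2 (X ω) * |(f (X ω) - f (X' ω)) * F (X ω) (X' ω)|) μ :=
    hbm g2 X hg2m hX _ hg2b _ hGabs
  have I5' : Integrable (fun ω => g2 (X' ω) * |(f (X ω) - f (X' ω)) * F (X ω) (X' ω)|) μ :=
    hbm g2 X' hg2m hX' _ hg2b _ hGabs
  have I6 : Integrable (fun ω => g2 (X ω) * D ω) μ := hbm g2 X hg2m hX _ hg2b _ hDint
  -- Step 1 : ∫ fn^{2k} ≤ ∫ g1(X) f(X)
  have S1 : ∫ ω, (trunc n (f (X ω))) ^ (2*k) ∂μ ≤ ∫ ω, g1 (X ω) * f (X ω) ∂μ :=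
    integral_mono I1 I2 (fun ω => trunc_self_mul n (f (X ω)) k hk)
  -- Step 2 : ∫ g1(X) f(X) = ∫ g1(X) F(X,X')
  have S2 : ∫ ω, g1 (X ω) * f (X ω) ∂μ = ∫ ω, g1 (X ω) * F (X ω) (X' ω) ∂μ := by
    have hsm : StronglyMeasurable[m] (fun ω => g1 (X ω)) :=
      ((hg1m.comp hXm)).stronglyMeasurable
    have p1 := pull_out_condexp hm μ (fun ω => g1 (X ω)) (fun ω => F (X ω) (X' ω)) hsm
      _ (fun ω => hg1b (X ω)) hFX1
    rw [p1]
    refine integral_congr_ae ?_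
    filter_upwards [hcond] with ω hω
    rw [hω]
  -- Step 3 : ∫ g1(X') F(X,X') = - ∫ g1(X) F(X,X')
  have S3 : ∫ ω, g1 (X' ω) * F (X ω) (X' ω) ∂μ = - ∫ ω, g1 (X ω) * F (X ω) (X' ω) ∂μ := by
    have hh : Measurable (Function.uncurry (fun x y => g1 y * F x y)) :=
      (hg1m.comp measurable_snd).mul hF
    have e := swap_integral_exch μ X X' hX hX' hexch (fun x y => g1 y * F x y) hh
    rw [e, ← integral_neg]
    refine integral_congr_ae ?_
    filter_upwards [hFanti] with ω hω
    have : F (X' ω) (X ω) = - F (X ω) (X' ω) := by linarith [hω]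
    rw [this]; ring
  -- Step 6 : symmetrization of g2 |G|
  have S6 : ∫ ω, g2 (X' ω) * |(f (X ω) - f (X' ω)) * F (X ω) (X' ω)| ∂μ
      = ∫ ω, g2 (X ω) * |(f (X ω) - f (X' ω)) * F (X ω) (X' ω)| ∂μ := by
    have hh : Measurable (Function.uncurry (fun x y => g2 y * |(f x - f y) * F x y|)) := by
      refine (hg2m.comp measurable_snd).mul ?_
      refine Measurable.abs ?_
      exact (((hf.comp measurable_fst).sub (hf.comp measurable_snd)).mul hF)
    have e := swap_integral_exch μ X X' hX hX' hexch _ hh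
    rw [e]
    refine integral_congr_ae ?_
    filter_upwards [hFanti] with ω hω
    have h1 : F (X' ω) (X ω) = - F (X ω) (X' ω) := by linarith [hω]
    rw [h1]
    congr 1
    rw [abs_mul, abs_mul, abs_neg, abs_sub_comm]
  -- Step 4/5 : main estimate
  have S45 : 4 * ∫ ω, g1 (X ω) * F (X ω) (X' ω) ∂μ
      ≤ ((2*k-1 : ℕ) : ℝ) * (2 * ∫ ω, g2 (X ω) * |(f (X ω) - f (X' ω)) * F (X ω) (X' ω)| ∂μ) := by
    have key : ∀ ω, 2 * ((g1 (X ω) - g1 (X' ω)) * F (X ω) (X' ω))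
        ≤ ((2*k-1 : ℕ) : ℝ) * ((g2 (X ω) + g2 (X' ω)) *
            |(f (X ω) - f (X' ω)) * F (X ω) (X' ω)|) := by
      intro ω
      set a := trunc n (f (X ω))
      set b := trunc n (f (X' ω))
      set c := F (X ω) (X' ω)
      have h1 := odd_pow_sub_le a b k hk
      have h2 : |a - b| ≤ |f (X ω) - f (X' ω)| := trunc_lipschitz n _ _
      have hsum : (0:ℝ) ≤ a ^ (2*k-2) + b ^ (2*k-2) := by
        have he : Even (2*k-2) := ⟨k-1, by omega⟩
        have := he.pow_nonneg a
        have := he.pow_nonneg b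
        linarith
      calc 2 * ((a ^ (2*k-1) - b ^ (2*k-1)) * c)
          ≤ 2 * (|a ^ (2*k-1) - b ^ (2*k-1)| * |c|) := by
            have := le_abs_self ((a ^ (2*k-1) - b ^ (2*k-1)) * c)
            rw [abs_mul] at this
            linarith
        _ = (2 * |a ^ (2*k-1) - b ^ (2*k-1)|) * |c| := by ring
        _ ≤ ((2*k-1 : ℕ) : ℝ) * (a ^ (2*k-2) + b ^ (2*k-2)) * |a - b| * |c| :=
            mul_le_mul_of_nonneg_right h1 (abs_nonneg c)
        _ ≤ ((2*k-1 : ℕ) : ℝ) * (a ^ (2*k-2) + b ^ (2*k-2)) * |f (X ω) - f (X' ω)| * |c| := by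
            have hnn : (0:ℝ) ≤ ((2*k-1 : ℕ) : ℝ) * (a ^ (2*k-2) + b ^ (2*k-2)) := by positivity
            exact mul_le_mul_of_nonneg_right (mul_le_mul_of_nonneg_left h2 hnn) (abs_nonneg c)
        _ = ((2*k-1 : ℕ) : ℝ) * ((a ^ (2*k-2) + b ^ (2*k-2)) * |(f (X ω) - f (X' ω)) * c|) := by
            rw [abs_mul]; ring
    have Ilhs : Integrable (fun ω => 2 * ((g1 (X ω) - g1 (X' ω)) * F (X ω) (X' ω))) μ := by
      have : Integrable (fun ω => g1 (X ω) * F (X ω) (X' ω)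
          - g1 (X' ω) * F (X ω) (X' ω)) μ := I3.sub I4
      exact (this.const_mul 2).congr (Filter.Eventually.of_forall fun ω => by ring_nf)
    have Irhs : Integrable (fun ω => ((2*k-1 : ℕ) : ℝ) * ((g2 (X ω) + g2 (X' ω)) *
        |(f (X ω) - f (X' ω)) * F (X ω) (X' ω)|)) μ := by
      have : Integrable (fun ω => g2 (X ω) * |(f (X ω) - f (X' ω)) * F (X ω) (X' ω)|
          + g2 (X' ω) * |(f (X ω) - f (X' ω)) * F (X ω) (X' ω)|) μ := I5.add I5'
      exact (this.const_mul _).congr (Filter.Eventually.of_forall fun ω => by ring_nf)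
    have hmono := integral_mono Ilhs Irhs key
    have elhs : ∫ ω, 2 * ((g1 (X ω) - g1 (X' ω)) * F (X ω) (X' ω)) ∂μ
        = 4 * ∫ ω, g1 (X ω) * F (X ω) (X' ω) ∂μ := by
      have e1 : ∫ ω, 2 * ((g1 (X ω) - g1 (X' ω)) * F (X ω) (X' ω)) ∂μ
          = 2 * ∫ ω, (g1 (X ω) * F (X ω) (X' ω) - g1 (X' ω) * F (X ω) (X' ω)) ∂μ := by
        rw [← integral_const_mul]
        exact integral_congr_ae (Filter.Eventually.of_forall fun ω => by ring)
      rw [e1, integral_sub I3 I4, S3]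
      ring
    have erhs : ∫ ω, ((2*k-1 : ℕ) : ℝ) * ((g2 (X ω) + g2 (X' ω)) *
          |(f (X ω) - f (X' ω)) * F (X ω) (X' ω)|) ∂μ
        = ((2*k-1 : ℕ) : ℝ) * (2 * ∫ ω, g2 (X ω) * |(f (X ω) - f (X' ω)) * F (X ω) (X' ω)| ∂μ) := by
      have e1 : ∫ ω, ((2*k-1 : ℕ) : ℝ) * ((g2 (X ω) + g2 (X' ω)) *
            |(f (X ω) - f (X' ω)) * F (X ω) (X' ω)|) ∂μ
          = ((2*k-1 : ℕ) : ℝ) * ∫ ω, (g2 (X ω) * |(f (X ω) - f (X' ω)) * F (X ω) (X' ω)|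
              + g2 (X' ω) * |(f (X ω) - f (X' ω)) * F (X ω) (X' ω)|) ∂μ := by
        rw [← integral_const_mul]
        exact integral_congr_ae (Filter.Eventually.of_forall fun ω => by ring)
      rw [e1, integral_add I5 I5', S6]
      ring
    rw [elhs, erhs] at hmono
    exact hmono
  -- Step 7 : pull out conditional expectation
  have S7 : ∫ ω, g2 (X ω) * |(f (X ω) - f (X' ω)) * F (X ω) (X' ω)| ∂μ
      = ∫ ω, g2 (X ω) * D ω ∂μ := by
    have hsm : StronglyMeasurable[m] (fun ω => g2 (X ω)) :=
      ((hg2m.comp hXm)).stronglyMeasurable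
    exact pull_out_condexp hm μ (fun ω => g2 (X ω)) _ hsm _ (fun ω => hg2b (X ω)) hGabs
  -- put everything together
  have efin : ∫ ω, (trunc n (f (X ω))) ^ (2*k-2) * ((1/2) * D ω) ∂μ
      = (1/2) * ∫ ω, g2 (X ω) * D ω ∂μ := by
    rw [← integral_const_mul]
    exact integral_congr_ae (Filter.Eventually.of_forall fun ω => by rw [hg2_def]; ring)
  rw [efin]
  have hnn : (0:ℝ) ≤ ((2*k-1:ℕ):ℝ) := by positivity
  nlinarith [S1, S2, S45, S7]

lemma holder_step {Ω : Type*} [MeasurableSpace Ω] (μ : Measure Ω) [IsProbabilityMeasure μ]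
    (fn D : Ω → ℝ) (hfn : Measurable fn) (hD : Measurable D)
    (hD0 : 0 ≤ᵐ[μ] D) (hDint : Integrable D μ) (n : ℕ) (hfnb : ∀ ω, |fn ω| ≤ (n:ℝ))
    (k : ℕ) (hk : 0 < k)
    (hA : ∫ ω, fn ω ^ (2*k) ∂μ
        ≤ (2*k-1 : ℕ) * ∫ ω, fn ω ^ (2*k-2) * ((1/2) * D ω) ∂μ) :
    ∫⁻ ω, ENNReal.ofReal (fn ω ^ (2*k)) ∂μ
      ≤ ((2*k-1 : ℕ) : ℝ≥0∞) ^ k * ∫⁻ ω, ENNReal.ofReal (((1/2) * D ω) ^ k) ∂μ := by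
  set E : Ω → ℝ := fun ω => (1/2) * D ω with hE_def
  have hEm : Measurable E := hD.const_mul _
  have hE0 : 0 ≤ᵐ[μ] E := by
    filter_upwards [hD0] with ω h
    simp only [Pi.zero_apply] at h ⊢
    have he : E ω = 1/2 * D ω := rfl
    rw [he]; linarith
  have hEint : Integrable E μ := hDint.const_mul _
  have heven : ∀ (j : ℕ) (ω : Ω), (0:ℝ) ≤ fn ω ^ (2*j) := by
    intro j ω
    have : Even (2*j) := ⟨j, by omega⟩
    exact this.pow_nonneg _
  have heven' : ∀ ω, (0:ℝ) ≤ fn ω ^ (2*k-2) := by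
    intro ω
    have : Even (2*k-2) := ⟨k-1, by omega⟩
    exact this.pow_nonneg _
  -- integrability of both sides of hA
  have Ifn : Integrable (fun ω => fn ω ^ (2*k)) μ := by
    refine (integrable_const ((n:ℝ)^(2*k))).mono' (hfn.pow_const _).aestronglyMeasurable ?_
    refine Filter.Eventually.of_forall fun ω => ?_
    rw [Real.norm_eq_abs, abs_pow]
    exact pow_le_pow_left₀ (abs_nonneg _) (hfnb ω) _
  have IfE : Integrable (fun ω => fn ω ^ (2*k-2) * E ω) μ := by
    refine hEint.bdd_mul (c := (n:ℝ)^(2*k-2)) (hfn.pow_const _).aestronglyMeasurable (Filter.Eventually.of_forall fun ω => ?_)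
    rw [Real.norm_eq_abs, abs_pow]
    exact pow_le_pow_left₀ (abs_nonneg _) (hfnb ω) _
  set An := ∫⁻ ω, ENNReal.ofReal (fn ω ^ (2*k)) ∂μ with hAn_def
  set M := ∫⁻ ω, ENNReal.ofReal (fn ω ^ (2*k-2) * E ω) ∂μ with hM_def
  set B := ∫⁻ ω, ENNReal.ofReal ((E ω) ^ k) ∂μ with hB_def
  set C : ℝ≥0∞ := ((2*k-1 : ℕ) : ℝ≥0∞) with hC_def
  have hAn_eq : ENNReal.ofReal (∫ ω, fn ω ^ (2*k) ∂μ) = An :=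
    ofReal_integral_eq_lintegral_ofReal Ifn (Filter.Eventually.of_forall (heven k))
  have hM_eq : ENNReal.ofReal (∫ ω, fn ω ^ (2*k-2) * E ω ∂μ) = M :=
    ofReal_integral_eq_lintegral_ofReal IfE
      (by filter_upwards [hE0] with ω h; exact mul_nonneg (heven' ω) h)
  have hstep1 : An ≤ C * M := by
    rw [← hAn_eq, ← hM_eq, hC_def]
    calc ENNReal.ofReal (∫ ω, fn ω ^ (2*k) ∂μ)
        ≤ ENNReal.ofReal (((2*k-1 : ℕ):ℝ) * ∫ ω, fn ω ^ (2*k-2) * E ω ∂μ) :=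
          ENNReal.ofReal_le_ofReal hA
      _ = ((2*k-1 : ℕ) : ℝ≥0∞) * ENNReal.ofReal (∫ ω, fn ω ^ (2*k-2) * E ω ∂μ) := by
          rw [ENNReal.ofReal_mul (by positivity), ENNReal.ofReal_natCast]
  have hAn_fin : An ≠ ⊤ := by
    have : An ≤ ENNReal.ofReal ((n:ℝ)^(2*k)) * μ Set.univ := by
      rw [hAn_def, ← lintegral_const]
      refine lintegral_mono fun ω => ENNReal.ofReal_le_ofReal ?_
      calc fn ω ^ (2*k) ≤ |fn ω ^ (2*k)| := le_abs_self _
        _ = |fn ω| ^ (2*k) := abs_pow _ _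
        _ ≤ (n:ℝ)^(2*k) := pow_le_pow_left₀ (abs_nonneg _) (hfnb ω) _
    exact ne_top_of_le_ne_top (by simp) this
  rcases Nat.eq_or_lt_of_le hk with hk1 | hk2
  · -- k = 1
    have hkk : k = 1 := hk1.symm
    subst hkk
    have hM_eq_B : M = B := by
      rw [hM_def, hB_def]
      refine lintegral_congr fun ω => ?_
      norm_num
    calc An ≤ C * M := hstep1
      _ = C ^ 1 * B := by rw [hM_eq_B, pow_one]
  · -- 2 ≤ k
    have hk2' : 2 ≤ k := hk2
    have hkR : (1:ℝ) < (k:ℝ) := by exact_mod_cast hk2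
    have hk1R : (0:ℝ) < (k:ℝ) - 1 := by linarith
    have hkne : (k:ℝ) ≠ 0 := by positivity
    set u : Ω → ℝ≥0∞ := fun ω => ENNReal.ofReal (fn ω ^ (2*k-2)) with hu_def
    set v : Ω → ℝ≥0∞ := fun ω => ENNReal.ofReal (E ω) with hv_def
    have hum : Measurable u := (hfn.pow_const _).ennreal_ofReal
    have hvm : Measurable v := hEm.ennreal_ofReal
    set p : ℝ := (k:ℝ) / ((k:ℝ) - 1) with hp_def
    have hpq : Real.HolderConjugate p (k:ℝ) :=
      ((Real.holderConjugate_iff_eq_conjExponent hkR).mpr hp_def).symm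
    have hppos : (0:ℝ) ≤ p := by rw [hp_def]; positivity
    have hu_p : ∀ ω, u ω ^ p = ENNReal.ofReal (fn ω ^ (2*k)) := by
      intro ω
      have hue : u ω = ENNReal.ofReal (fn ω ^ (2*k-2)) := rfl
      rw [hue, ENNReal.ofReal_rpow_of_nonneg (heven' ω) hppos]
      congr 1
      have h2 : fn ω ^ (2*k-2) = (fn ω ^ 2) ^ (k-1) := by rw [← pow_mul]; congr 1; omega
      have h3 : fn ω ^ (2*k) = (fn ω ^ 2) ^ k := by rw [← pow_mul]
      rw [h2, h3]
      have hs : (0:ℝ) ≤ fn ω ^ 2 := sq_nonneg _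
      rw [← Real.rpow_natCast (fn ω ^ 2) (k-1), ← Real.rpow_natCast (fn ω ^ 2) k,
        ← Real.rpow_mul hs]
      congr 1
      have hc : ((k-1 : ℕ):ℝ) = (k:ℝ) - 1 := by
        push_cast [Nat.cast_sub hk]
        ring
      rw [hc, hp_def]
      field_simp
    have hup_int : ∫⁻ ω, u ω ^ p ∂μ = An := by
      rw [hAn_def]
      exact lintegral_congr fun ω => hu_p ω
    have hv_q : ∫⁻ ω, v ω ^ ((k:ℕ):ℝ) ∂μ = B := by
      rw [hB_def]
      refine lintegral_congr_ae ?_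
      filter_upwards [hE0] with ω h
      simp only [Pi.zero_apply] at h
      have hve : v ω = ENNReal.ofReal (E ω) := rfl
      rw [hve, ENNReal.rpow_natCast, ← ENNReal.ofReal_pow h]
    have hMuv : M = ∫⁻ ω, (u * v) ω ∂μ := by
      rw [hM_def]
      refine lintegral_congr fun ω => ?_
      have : (u * v) ω = ENNReal.ofReal (fn ω ^ (2*k-2)) * ENNReal.ofReal (E ω) := rfl
      rw [this, ← ENNReal.ofReal_mul (heven' ω)]
    have hM_le' : M ≤ An ^ (1/p) * B ^ (1/(k:ℝ)) := by
      have hh := ENNReal.lintegral_mul_le_Lp_mul_Lq μ hpq hum.aemeasurable hvm.aemeasurable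
      rw [hup_int] at hh
      have : ∫⁻ ω, v ω ^ (k:ℝ) ∂μ = B := by exact_mod_cast hv_q
      rw [this] at hh
      rw [hMuv]
      exact hh
    by_cases hAn0 : An = 0
    · rw [hAn0]; exact zero_le
    have hsum1 : 1/p + 1/(k:ℝ) = 1 := by
      rw [hp_def]
      field_simp
      ring
    have hr : An = An ^ (1/p) * An ^ (1/(k:ℝ)) := by
      rw [← ENNReal.rpow_add _ _ hAn0 hAn_fin, hsum1, ENNReal.rpow_one]
    have h3 : An ^ (1/p) * An ^ (1/(k:ℝ)) ≤ An ^ (1/p) * (C * B ^ (1/(k:ℝ))) := by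
      rw [← hr]
      calc An ≤ C * M := hstep1
        _ ≤ C * (An ^ (1/p) * B ^ (1/(k:ℝ))) := mul_le_mul_right hM_le' C
        _ = An ^ (1/p) * (C * B ^ (1/(k:ℝ))) := by ring
    have ha0 : An ^ (1/p) ≠ 0 :=
      (ENNReal.rpow_pos (pos_iff_ne_zero.mpr hAn0) hAn_fin).ne'
    have hatop : An ^ (1/p) ≠ ⊤ := ENNReal.rpow_ne_top_of_nonneg (by positivity) hAn_fin
    have hkey : An ^ (1/(k:ℝ)) ≤ C * B ^ (1/(k:ℝ)) :=
      (ENNReal.mul_le_mul_iff_right ha0 hatop).mp h3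
    have hfinal := ENNReal.rpow_le_rpow hkey (by positivity : (0:ℝ) ≤ (k:ℝ))
    have hL : (An ^ (1/(k:ℝ))) ^ ((k:ℝ)) = An := by
      rw [← ENNReal.rpow_mul, one_div, inv_mul_cancel₀ hkne, ENNReal.rpow_one]
    have hR : (C * B ^ (1/(k:ℝ))) ^ ((k:ℝ)) = C ^ k * B := by
      rw [ENNReal.mul_rpow_of_nonneg _ _ (by positivity : (0:ℝ) ≤ (k:ℝ)),
        ← ENNReal.rpow_mul, one_div, inv_mul_cancel₀ hkne, ENNReal.rpow_one,
        ENNReal.rpow_natCast]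
    rw [hL, hR] at hfinal
    exact hfinal


lemma trunc_pow_mono (k : ℕ) (t : ℝ) :
    Monotone (fun n : ℕ => ENNReal.ofReal ((trunc n t) ^ (2*k))) := by
  intro a b hab
  refine ENNReal.ofReal_le_ofReal ?_
  have he : Even (2*k) := ⟨k, by omega⟩
  rw [← he.pow_abs (trunc a t), ← he.pow_abs (trunc b t), trunc_abs, trunc_abs]
  exact pow_le_pow_left₀ (le_min (abs_nonneg t) (by positivity))
    (min_le_min le_rfl (by exact_mod_cast Nat.cast_le.mpr hab)) _

lemma trunc_pow_sup (k : ℕ) (t : ℝ) :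
    ⨆ n : ℕ, ENNReal.ofReal ((trunc n t) ^ (2*k)) = ENNReal.ofReal (t ^ (2*k)) := by
  apply le_antisymm
  · refine iSup_le fun n => ENNReal.ofReal_le_ofReal ?_
    have he : Even (2*k) := ⟨k, by omega⟩
    rw [← he.pow_abs (trunc n t), ← he.pow_abs t]
    exact pow_le_pow_left₀ (abs_nonneg _) ((trunc_abs n t) ▸ min_le_left _ _) _
  · refine le_iSup_of_le ⌈|t|⌉₊ ?_
    rw [trunc_eq_self (Nat.le_ceil |t|)]

end aux

/-- **Stein's method for concentration, Theorem 1.5 (iii).**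
For an exchangeable pair `(X, X')` with antisymmetric square-integrable `F` satisfying
`E(F(X,X') | X) = f(X)` a.s., set `Δ(X) := (1/2) E(|(f(X)-f(X')) F(X,X')| | X)`.
Then for every positive integer `k`, `E(f(X)^{2k}) ≤ (2k-1)^k E(Δ(X)^k)`
(stated with upper Lebesgue integrals since either side may be infinite). -/
theorem moment_bound_of_exchangeable_pair
    {Ω 𝒳 : Type*} [MeasurableSpace Ω]
    [MetricSpace 𝒳] [TopologicalSpace.SeparableSpace 𝒳]
    [MeasurableSpace 𝒳] [BorelSpace 𝒳]
    (μ : Measure Ω) [IsProbabilityMeasure μ]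
    (X X' : Ω → 𝒳) (hX : Measurable X) (hX' : Measurable X')
    (hexch : Measure.map (fun ω => (X ω, X' ω)) μ = Measure.map (fun ω => (X' ω, X ω)) μ)
    (F : 𝒳 → 𝒳 → ℝ) (hF : Measurable (Function.uncurry F))
    (hFL2 : MemLp (fun ω => F (X ω) (X' ω)) 2 μ)
    (hFanti : ∀ᵐ ω ∂μ, F (X ω) (X' ω) = - F (X' ω) (X ω))
    (f : 𝒳 → ℝ) (hf : Measurable f)
    (hfL2 : MemLp (fun ω => f (X ω)) 2 μ)
    (hcond : μ[(fun ω => F (X ω) (X' ω)) | MeasurableSpace.comap X inferInstance]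
      =ᵐ[μ] fun ω => f (X ω))
    (hprod : Integrable (fun ω => (f (X ω) - f (X' ω)) * F (X ω) (X' ω)) μ)
    (k : ℕ) (hk : 0 < k) :
    ∫⁻ ω, ENNReal.ofReal ((f (X ω)) ^ (2 * k)) ∂μ
      ≤ ((2 * k - 1 : ℕ) : ENNReal) ^ k *
        ∫⁻ ω, ENNReal.ofReal
          (((1 / 2) * (μ[(fun ω' => |(f (X ω') - f (X' ω')) * F (X ω') (X' ω')|)
              | MeasurableSpace.comap X inferInstance]) ω) ^ k) ∂μ := by
  have hm : MeasurableSpace.comap X inferInstance ≤ ‹MeasurableSpace Ω› := hX.comap_le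
  have hXm : Measurable[MeasurableSpace.comap X inferInstance] X :=
    Measurable.of_comap_le le_rfl
  set D : Ω → ℝ :=
    μ[(fun ω' => |(f (X ω') - f (X' ω')) * F (X ω') (X' ω')|)
        | MeasurableSpace.comap X inferInstance] with hD_def
  have hDmeas : Measurable D := (stronglyMeasurable_condExp.mono hm).measurable
  have hDint : Integrable D μ := integrable_condExp
  have hD0 : 0 ≤ᵐ[μ] D :=
    condExp_nonneg (Filter.Eventually.of_forall fun ω => abs_nonneg _)
  -- rewrite the LHS as a supremum via monotone convergence
  have hmeasn : ∀ n : ℕ, Measurable fun ω => ENNReal.ofReal ((trunc n (f (X ω))) ^ (2*k)) :=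
    fun n => ((((trunc_continuous n).measurable.comp (hf.comp hX)).pow_const _)).ennreal_ofReal
  have hsup : ∫⁻ ω, ENNReal.ofReal ((f (X ω)) ^ (2 * k)) ∂μ
      = ⨆ n : ℕ, ∫⁻ ω, ENNReal.ofReal ((trunc n (f (X ω))) ^ (2*k)) ∂μ := by
    rw [← lintegral_iSup hmeasn (fun a b hab ω => trunc_pow_mono k (f (X ω)) hab)]
    exact lintegral_congr fun ω => (trunc_pow_sup k (f (X ω))).symm
  rw [hsup]
  refine iSup_le fun n => ?_
  have hA := core_ineq hm μ X X' hX hX' hXm hexch F hF hFL2 hFanti f hf hfL2 hcond hprod k hk n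
  have hB := holder_step μ (fun ω => trunc n (f (X ω))) D
    ((trunc_continuous n).measurable.comp (hf.comp hX)) hDmeas hD0 hDint n
    (fun ω => trunc_abs_le_n n (f (X ω))) k hk hA
  refine le_trans hB ?_
  refine mul_le_mul_right (le_of_eq (lintegral_congr fun ω => ?_)) _
  congr 2
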